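/- Let (a_n)_{n≥1} be elements of a P-tracial algebra, all with the same P-distribution (κ_p(a_n,…,a_n) is independent of n for every p), which are P-free in the following sense: for every k, every p ∈ P_k and every (n₁,…,n_k) ∈ ℕ^k, κ_p(a_{n₁},…,a_{n_k}) = 0 unless the map j ↦ n_j is constant on every block of p, and in that case κ_p(a_{n₁},…,a_{n_k}) = Π_v κ_{p_{|b_v}}(a_v,…,a_v), the product over the distinct values v of (n_j), where b_v is the union of the cycles of p whose indices all carry the value v. Assume κ_q(a₁) = 0 for both q ∈ P₁ (vanishing first-order cumulants). Set S_n = n^{−1/2}(a₁+⋯+a_n). Then for every k and every p ∈ P_k, κ_p(S_n,…,S_n) converges as n → ∞, and its limit equals Σ_π Π_{b∈π} κ_{p_{|∪b}}(a₁,a₁), where the sum ranges over the set partitions π of the set of cycles of p all of whose blocks consist either of a single cycle of p containing exactly two elements of {1,…,k}, or of two cycles of p each containing exactly one element of {1,…,k} (the sum being empty, hence the limit 0, if no such π exists). In particular S_n converges in P-distribution to a centered P-Gaussian element, whose cumulants depend only on the second-order cumulants κ_q(a₁,a₁), q ∈ P₂, of a₁. -/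

import Mathlib

open scoped Classical

/-- Partitions of `{1,…,k,1′,…,k′}`, modelled as setoids on `Fin k ⊕ Fin k`
(unprimed elements on the left, primed on the right). -/
abbrev PP (k : ℕ) := Setoid (Fin k ⊕ Fin k)

noncomputable instance setoidFintypeInst {α : Type*} [Fintype α] : Fintype (Setoid α) :=
  Fintype.ofInjective
    (fun s : Setoid α => (Finset.univ.filter fun p : α × α => s.r p.1 p.2))
    (by
      intro s t h
      have h' : ∀ x y : α, s.r x y ↔ t.r x y := by
        intro x y
        have := Finset.ext_iff.mp h (x, y)
        simpa using this
      exact Setoid.ext h')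

/-- number of blocks of a partition -/
noncomputable def nC {α : Type*} (s : Setoid α) : ℕ := Nat.card (Quotient s)

/-- the identity partition `{{i,i′}}`. -/
def idP (k : ℕ) : PP k := Setoid.ker (Sum.elim (id : Fin k → Fin k) id)

/-- twice the distance `d(p,q) = (nc p + nc q)/2 − nc (p ⊔ q)`. -/
noncomputable def d2 {k : ℕ} (p q : PP k) : ℤ := (nC p : ℤ) + nC q - 2 * nC (p ⊔ q)

/-- the geodesic order on partitions: `q ≤ p` iff `d(id,q) + d(q,p) = d(id,p)`. -/
def pLe {k : ℕ} (q p : PP k) : Prop := d2 (idP k) q + d2 q p = d2 (idP k) p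

/-- a permutation `σ` seen as the partition `{{i, σ(i)′}}`. -/
def permToP {k : ℕ} (σ : Equiv.Perm (Fin k)) : PP k :=
  Setoid.ker (Sum.elim (fun i => σ i) (fun j => j))

/-- tensor product of partitions: place `q` to the right of `p`. -/
def ptensor {k l : ℕ} (p : PP k) (q : PP l) : PP (k + l) :=
  Setoid.ker (fun x : Fin (k + l) ⊕ Fin (k + l) =>
    match x with
    | Sum.inl i =>
      (match finSumFinEquiv.symm i with
       | Sum.inl a => (Sum.inl (Quotient.mk p (Sum.inl a)) : Quotient p ⊕ Quotient q)
       | Sum.inr b => Sum.inr (Quotient.mk q (Sum.inl b)))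
    | Sum.inr i =>
      (match finSumFinEquiv.symm i with
       | Sum.inl a => Sum.inl (Quotient.mk p (Sum.inr a))
       | Sum.inr b => Sum.inr (Quotient.mk q (Sum.inr b))))

/-- transpose of a partition: exchange `i` and `i′`. -/
def ptrans {k : ℕ} (p : PP k) : PP k := Setoid.comap Sum.swap p

/-- the map exchanging `j` and `j′` for the (0-based) indices `j ≥ l`. -/
def swapAbove {k : ℕ} (l : ℕ) : Fin k ⊕ Fin k → Fin k ⊕ Fin k
  | Sum.inl i => if l ≤ (i : ℕ) then Sum.inr i else Sum.inl i
  | Sum.inr i => if l ≤ (i : ℕ) then Sum.inl i else Sum.inr i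

/-- the operation `S_l` on partitions: exchange `j` and `j′` for every column `j > l`. -/
def sOp {k : ℕ} (l : ℕ) (p : PP k) : PP k := Setoid.comap (swapAbove l) p

/-- the setoid of "same cycle of σ". -/
def sameCycleSetoid {k : ℕ} (σ : Equiv.Perm (Fin k)) : Setoid (Fin k) :=
  ⟨σ.SameCycle, ⟨fun _ => Equiv.Perm.SameCycle.refl σ _, fun h => h.symm, fun h h' => h.trans h'⟩⟩

/-- number of orbits (fixed points included) of a permutation. -/
noncomputable def cyc {k : ℕ} (σ : Equiv.Perm (Fin k)) : ℕ :=
  Nat.card (Quotient (sameCycleSetoid σ))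

/-- reflection length `ℓ(σ) = k − c(σ)`. -/
noncomputable def plen {k : ℕ} (σ : Equiv.Perm (Fin k)) : ℤ := (k : ℤ) - cyc σ

/-- the geodesic (absolute) order on permutations. -/
def permLe {k : ℕ} (τ σ : Equiv.Perm (Fin k)) : Prop := plen τ + plen (τ⁻¹ * σ) = plen σ

/-- `σ₁ ⊕ σ₂`, acting as `σ₁` on `{1,…,l}` and as the shifted copy of `σ₂` on `{l+1,…,l+m}`. -/
def sumPerm {l m : ℕ} (σ₁ : Equiv.Perm (Fin l)) (σ₂ : Equiv.Perm (Fin m)) :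
    Equiv.Perm (Fin (l + m)) :=
  finSumFinEquiv.permCongr (Equiv.sumCongr σ₁ σ₂)

/-- the setoid generated by a relation `r`. -/
def genSetoid {α : Type*} (r : α → α → Prop) : Setoid α :=
  sInf {s : Setoid α | ∀ x y, r x y → s.r x y}

/-- the lexicographic encoding `(j, t) ↦ ∑_{j' < j} n j' + t` of `Σ j, Fin (n j)` into
`Fin (∑ j, n j)`. -/
def encodeSigma {k : ℕ} (n : Fin k → ℕ) (x : Σ j : Fin k, Fin (n j)) : Fin (∑ j, n j) :=
  ⟨(∑ j' ∈ Finset.univ.filter fun j' => j' < x.1, n j') + (x.2 : ℕ), by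
    calc (∑ j' ∈ Finset.univ.filter fun j' => j' < x.1, n j') + (x.2 : ℕ)
        < (∑ j' ∈ Finset.univ.filter fun j' => j' < x.1, n j') + n x.1 := by
          exact Nat.add_lt_add_left x.2.isLt _
      _ = ∑ j' ∈ insert x.1 (Finset.univ.filter fun j' => j' < x.1), n j' := by
          rw [Finset.sum_insert (by simp)]
          ring
      _ ≤ ∑ j', n j' := Finset.sum_le_sum_of_subset (Finset.subset_univ _)⟩

/-- `endOf n x` identifies `x` as an external endpoint of its group: the top of the `j`-th
group if `x` is the first unprimed element, the bottom if `x` is the last primed one. -/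
def endOf {k : ℕ} (n : Fin k → ℕ) :
    (Σ j : Fin k, Fin (n j)) ⊕ (Σ j : Fin k, Fin (n j)) → Option (Fin k ⊕ Fin k)
  | Sum.inl ⟨j, t⟩ => if (t : ℕ) = 0 then some (Sum.inl j) else none
  | Sum.inr ⟨j, t⟩ => if (t : ℕ) + 1 = n j then some (Sum.inr j) else none

/-- the elementary relations defining the partition `Insⁿ(p) ∘ σ` appearing in the
product-compatibility axiom: within the `j`-th group, the primed (bottom) vertex of a
factor is glued to the unprimed (top) vertex of the next factor, and the external
endpoints of the groups are glued according to `p`. -/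
def chainRel {k : ℕ} (n : Fin k → ℕ) (p : PP k) :
    ((Σ j : Fin k, Fin (n j)) ⊕ (Σ j : Fin k, Fin (n j))) →
      ((Σ j : Fin k, Fin (n j)) ⊕ (Σ j : Fin k, Fin (n j))) → Prop :=
  fun x y =>
    (∃ (j : Fin k) (t : ℕ) (h1 : t + 1 < n j),
        x = Sum.inr ⟨j, ⟨t, Nat.lt_of_succ_lt h1⟩⟩ ∧ y = Sum.inl ⟨j, ⟨t + 1, h1⟩⟩) ∨
    (∃ u v, p.r u v ∧ endOf n x = some u ∧ endOf n y = some v)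

/-- the partition `Insⁿ_i(p) ∘ σ ∈ P_{∑ n_j}` of the product-compatibility axiom. -/
def insPart {k : ℕ} (n : Fin k → ℕ) (p : PP k) : PP (∑ j, n j) :=
  genSetoid fun x y =>
    ∃ u v, chainRel n p u v ∧
      x = Sum.map (encodeSigma n) (encodeSigma n) u ∧
      y = Sum.map (encodeSigma n) (encodeSigma n) v

/-- relabelling of the columns of a partition by a permutation: `σ ∘ p ∘ σ⁻¹`. -/
def relabel {k : ℕ} (σ : Equiv.Perm (Fin k)) (p : PP k) : PP k :=
  Setoid.comap (Sum.map σ.symm σ.symm) p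

/-- A `P`-tracial algebra: a complex algebra `A` together with `k`-linear forms
`m_p : A^k → ℂ`, indexed by the partitions `p ∈ P_k`, which are symmetric under
simultaneous relabelling of the columns and of the arguments, and compatible with the
product of `A`. -/
structure PTracial (A : Type*) [Ring A] [Algebra ℂ A] where
  m : ∀ k : ℕ, PP k → (Fin k → A) → ℂ
  m_add : ∀ (k : ℕ) (p : PP k) (a : Fin k → A) (s : Fin k) (x y : A),
    m k p (Function.update a s (x + y)) =
      m k p (Function.update a s x) + m k p (Function.update a s y)
  m_smul : ∀ (k : ℕ) (p : PP k) (a : Fin k → A) (s : Fin k) (c : ℂ) (x : A),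
    m k p (Function.update a s (c • x)) = c * m k p (Function.update a s x)
  m_symm : ∀ (k : ℕ) (p : PP k) (σ : Equiv.Perm (Fin k)) (a : Fin k → A),
    m k p a = m k (relabel σ p) fun s => a (σ.symm s)
  m_prod : ∀ (k : ℕ) (p : PP k) (n : Fin k → ℕ), (∀ j, 0 < n j) →
    ∀ (a : ∀ j : Fin k, Fin (n j) → A) (b : Fin (∑ j, n j) → A),
      (∀ (j : Fin k) (t : Fin (n j)), b (encodeSigma n ⟨j, t⟩) = a j t) →
      m k p (fun j => (List.ofFn (a j)).prod) = m (∑ j, n j) (insPart n p) b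

/-- extraction of a partition to a subset `J` of its columns. -/
def extractP {k : ℕ} (p : PP k) (J : Finset (Fin k)) : PP J.card :=
  Setoid.comap
    (Sum.map (fun t => ((J.orderIsoOfFin rfl t : J) : Fin k))
      (fun t => ((J.orderIsoOfFin rfl t : J) : Fin k))) p

/-- columns `s` and `t` meet a common block of `p`. -/
def colRel {k : ℕ} (p : PP k) (s t : Fin k) : Prop :=
  p.r (Sum.inl s) (Sum.inl t) ∨ p.r (Sum.inl s) (Sum.inr t) ∨
    p.r (Sum.inr s) (Sum.inl t) ∨ p.r (Sum.inr s) (Sum.inr t)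

/-- `P`-freeness of two subalgebras, relative to the `P`-cumulant forms `κ`:
not-compatible mixed cumulants vanish, and cumulants factorize over tensor products. -/
def PFree {A : Type*} [Ring A] [Algebra ℂ A]
    (κ : ∀ k : ℕ, PP k → (Fin k → A) → ℂ) (A₁ A₂ : Subalgebra ℂ A) : Prop :=
  (∀ (k : ℕ) (p : PP k) (a : Fin k → A), (∀ s, a s ∈ A₁ ∨ a s ∈ A₂) →
    (∃ s s' : Fin k, a s ∈ A₁ ∧ a s' ∈ A₂ ∧ colRel p s s') → κ k p a = 0) ∧
  (∀ (k₁ k₂ : ℕ) (p₁ : PP k₁) (p₂ : PP k₂) (a : Fin k₁ → A) (b : Fin k₂ → A),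
    (∀ s, a s ∈ A₁) → (∀ s, b s ∈ A₂) →
    κ (k₁ + k₂) (ptensor p₁ p₂) (Fin.append a b) = κ k₁ p₁ a * κ k₂ p₂ b)

/-- the column of an element of `{1,…,k,1′,…,k′}`. -/
def colOf {k : ℕ} : Fin k ⊕ Fin k → Fin k := Sum.elim id id

/-- the partition of the columns into the cycles of `p` (the blocks of `p ∨ id_k`). -/
def colSetoid {k : ℕ} (p : PP k) : Setoid (Fin k) :=
  Setoid.comap Sum.inl (p ⊔ idP k)

/-- the blocks of a set partition of `Fin k`, as a finite set of finite sets. -/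
noncomputable def classesOf {k : ℕ} (q : Setoid (Fin k)) : Finset (Finset (Fin k)) :=
  Finset.univ.image fun j => Finset.univ.filter fun j' => q.r j j'

set_option linter.unusedSectionVars false
section card
variable {α : Type*} [Fintype α]

noncomputable def qMap {s t : Setoid α} (h : s ≤ t) : Quotient s → Quotient t :=
  Quotient.lift (Quotient.mk t) (fun _ _ hab => Quotient.sound (Setoid.le_def.mp h hab))

lemma qMap_surj {s t : Setoid α} (h : s ≤ t) : Function.Surjective (qMap h) := by
  intro y
  induction y using Quotient.inductionOn with
  | _ a => exact ⟨Quotient.mk s a, rfl⟩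

lemma nC_le_of_le {s t : Setoid α} (h : s ≤ t) : nC t ≤ nC s :=
  Nat.card_le_card_of_surjective _ (qMap_surj h)

lemma eq_of_le_of_nC_le {s t : Setoid α} (h : s ≤ t) (hc : nC s ≤ nC t) : s = t := by
  have hcard : Fintype.card (Quotient s) = Fintype.card (Quotient t) := by
    have h1 := nC_le_of_le h
    simp only [nC, Nat.card_eq_fintype_card] at h1 hc
    omega
  have hbij : Function.Bijective (qMap h) :=
    (Fintype.bijective_iff_surjective_and_card _).mpr ⟨qMap_surj h, hcard⟩
  refine Setoid.ext fun x y => ⟨fun hxy => Setoid.le_def.mp h hxy, fun hxy => ?_⟩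
  have : qMap h (Quotient.mk s x) = qMap h (Quotient.mk s y) := Quotient.sound hxy
  exact Quotient.exact (hbij.1 this)

end card

section d2l
variable {k : ℕ}

lemma d2_self (p : PP k) : d2 p p = 0 := by simp [d2]; ring

lemma d2_nonneg (p q : PP k) : 0 ≤ d2 p q := by
  have h1 : nC (p ⊔ q) ≤ nC p := nC_le_of_le le_sup_left
  have h2 : nC (p ⊔ q) ≤ nC q := nC_le_of_le le_sup_right
  unfold d2; omega

lemma eq_of_d2_eq_zero {p q : PP k} (h : d2 p q = 0) : p = q := by
  have h1 : nC (p ⊔ q) ≤ nC p := nC_le_of_le le_sup_left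
  have h2 : nC (p ⊔ q) ≤ nC q := nC_le_of_le le_sup_right
  have e1 : p = p ⊔ q := eq_of_le_of_nC_le le_sup_left (by unfold d2 at h; omega)
  have e2 : q = p ⊔ q := eq_of_le_of_nC_le le_sup_right (by unfold d2 at h; omega)
  exact e1.trans e2.symm

lemma pLe_refl (p : PP k) : pLe p p := by simp [pLe, d2_self]

lemma measure_lt {p' p : PP k} (h : pLe p' p) (hne : p' ≠ p) :
    (d2 (idP k) p').toNat < (d2 (idP k) p).toNat := by
  have h0 : d2 p' p ≠ 0 := fun hz => hne (eq_of_d2_eq_zero hz)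
  have h1 := d2_nonneg p' p
  have h2 := d2_nonneg (idP k) p'
  unfold pLe at h
  omega

end d2l


section mul
variable {A : Type*} [Ring A] [Algebra ℂ A] (T : PTracial A) (κ : ∀ k : ℕ, PP k → (Fin k → A) → ℂ)
variable (hκ : ∀ (k : ℕ) (p : PP k) (a : Fin k → A),
      T.m k p a = ∑ p' : PP k, if pLe p' p then κ k p' a else 0)
include hκ

lemma kappa_formula (k : ℕ) (p : PP k) (a : Fin k → A) :
    κ k p a = T.m k p a - ∑ p' ∈ Finset.univ.filter (fun p' => pLe p' p ∧ p' ≠ p), κ k p' a := by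
  have h := hκ k p a
  have h2 : ∑ p' : PP k, (if pLe p' p then κ k p' a else 0)
      = ∑ p' ∈ Finset.univ.filter (fun p' => pLe p' p), κ k p' a :=
    (Finset.sum_filter _ _).symm
  have h3 : Finset.univ.filter (fun p' : PP k => pLe p' p ∧ p' ≠ p)
      = (Finset.univ.filter (fun p' : PP k => pLe p' p)).erase p := by
    ext q; simp [Finset.mem_erase, Finset.mem_filter, and_comm]
  have h4 : p ∈ Finset.univ.filter (fun p' : PP k => pLe p' p) := by
    simp [pLe_refl]
  rw [h2] at h
  rw [h3, eq_sub_iff_add_eq, h]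
  exact Finset.add_sum_erase _ (fun p' => κ k p' a) h4

lemma kappa_addN (k : ℕ) : ∀ (N : ℕ) (p : PP k), (d2 (idP k) p).toNat = N →
    ∀ (a : Fin k → A) (s : Fin k) (x y : A),
      κ k p (Function.update a s (x + y)) =
        κ k p (Function.update a s x) + κ k p (Function.update a s y) := by
  intro N
  induction N using Nat.strong_induction_on with
  | _ N ih =>
    intro p hp a s x y
    rw [kappa_formula T κ hκ, kappa_formula T κ hκ, kappa_formula T κ hκ, T.m_add]
    have hsum : ∑ p' ∈ Finset.univ.filter (fun p' : PP k => pLe p' p ∧ p' ≠ p),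
        κ k p' (Function.update a s (x + y))
        = ∑ p' ∈ Finset.univ.filter (fun p' : PP k => pLe p' p ∧ p' ≠ p),
          (κ k p' (Function.update a s x) + κ k p' (Function.update a s y)) := by
      refine Finset.sum_congr rfl fun p' hp' => ?_
      rw [Finset.mem_filter] at hp'
      exact ih _ (hp ▸ measure_lt hp'.2.1 hp'.2.2) p' rfl a s x y
    rw [hsum, Finset.sum_add_distrib]
    ring

lemma kappa_smulN (k : ℕ) : ∀ (N : ℕ) (p : PP k), (d2 (idP k) p).toNat = N →
    ∀ (a : Fin k → A) (s : Fin k) (c : ℂ) (x : A),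
      κ k p (Function.update a s (c • x)) = c * κ k p (Function.update a s x) := by
  intro N
  induction N using Nat.strong_induction_on with
  | _ N ih =>
    intro p hp a s c x
    rw [kappa_formula T κ hκ, kappa_formula T κ hκ, T.m_smul]
    have hsum : ∑ p' ∈ Finset.univ.filter (fun p' : PP k => pLe p' p ∧ p' ≠ p),
        κ k p' (Function.update a s (c • x))
        = ∑ p' ∈ Finset.univ.filter (fun p' : PP k => pLe p' p ∧ p' ≠ p),
          (c * κ k p' (Function.update a s x)) := by
      refine Finset.sum_congr rfl fun p' hp' => ?_
      rw [Finset.mem_filter] at hp'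
      exact ih _ (hp ▸ measure_lt hp'.2.1 hp'.2.2) p' rfl a s c x
    rw [hsum, ← Finset.mul_sum]
    ring

noncomputable def kML (k : ℕ) (p : PP k) : MultilinearMap ℂ (fun _ : Fin k => A) ℂ where
  toFun := κ k p
  map_update_add' := by
    intro inst m i x y
    have hi : inst = instDecidableEqFin k := Subsingleton.elim _ _
    subst hi
    exact kappa_addN T κ hκ k _ p rfl m i x y
  map_update_smul' := by
    intro inst m i c x
    have hi : inst = instDecidableEqFin k := Subsingleton.elim _ _
    subst hi
    simpa [smul_eq_mul] using kappa_smulN T κ hκ k _ p rfl m i c x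

variable (a : ℕ → A)

lemma kappa_expand (k : ℕ) (p : PP k) (c : ℂ) (n : ℕ) :
    κ k p (fun _ => c • ∑ i ∈ Finset.range n, a i)
      = ∑ r ∈ Fintype.piFinset (fun _ : Fin k => Finset.range n),
          c ^ k * κ k p (fun j => a (r j)) := by
  have h1 : κ k p (fun _ => c • ∑ i ∈ Finset.range n, a i)
      = (kML T κ hκ k p) (fun _ => c • ∑ i ∈ Finset.range n, a i) := rfl
  rw [h1]
  have h2 : (fun _ : Fin k => c • ∑ i ∈ Finset.range n, a i)
      = fun j : Fin k => c • ((fun _ : Fin k => ∑ i ∈ Finset.range n, a i) j) := rfl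
  rw [h2, MultilinearMap.map_smul_univ]
  rw [show (fun _ : Fin k => ∑ i ∈ Finset.range n, a i)
      = fun j : Fin k => ∑ i ∈ (fun _ : Fin k => Finset.range n) j, (fun _ : Fin k => a) j i from rfl]
  rw [MultilinearMap.map_sum_finset]
  simp only [Finset.prod_const, Finset.card_univ, Fintype.card_fin, smul_eq_mul, Finset.mul_sum]
  rfl

end mul


section comb
variable {k : ℕ}

lemma cond_iff (p : PP k) (r : Fin k → ℕ) :
    (∀ x y, p.r x y → r (colOf x) = r (colOf y)) ↔ colSetoid p ≤ Setoid.ker r := by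
  constructor
  · intro H
    have hsup : p ⊔ idP k ≤ Setoid.ker (fun x => r (colOf x)) := by
      refine sup_le ?_ ?_
      · intro x y hxy; exact H x y hxy
      · intro x y hxy
        exact congrArg r (hxy : colOf x = colOf y)
    intro j j' hjj'
    exact Setoid.le_def.mp hsup (hjj' : (p ⊔ idP k).r (Sum.inl j) (Sum.inl j'))
  · intro h x y hxy
    have h1 : (p ⊔ idP k).r x y := Setoid.le_def.mp le_sup_left hxy
    have lx : ∀ z : Fin k ⊕ Fin k, (p ⊔ idP k).r (Sum.inl (colOf z)) z := by
      intro z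
      cases z with
      | inl i => exact (p ⊔ idP k).refl _
      | inr i =>
        exact Setoid.le_def.mp (le_sup_right (a := p) (b := idP k))
          (show (idP k) (Sum.inl i) (Sum.inr i) from rfl)
    have h2 : (colSetoid p).r (colOf x) (colOf y) :=
      (p ⊔ idP k).trans (lx x) ((p ⊔ idP k).trans h1 ((p ⊔ idP k).symm (lx y)))
    exact Setoid.le_def.mp h h2

lemma class_eq {q : Setoid (Fin k)} {j j' : Fin k} (h : q.r j j') :
    (Finset.univ.filter fun x => q.r j x) = Finset.univ.filter fun x => q.r j' x := by
  ext x
  simp only [Finset.mem_filter, Finset.mem_univ, true_and]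
  exact ⟨fun hx => q.trans (q.symm h) hx, fun hx => q.trans h hx⟩

lemma mem_classesOf {q : Setoid (Fin k)} {b : Finset (Fin k)} :
    b ∈ classesOf q ↔ ∃ j, b = Finset.univ.filter fun j' => q.r j j' := by
  simp only [classesOf, Finset.mem_image, Finset.mem_univ, true_and]
  exact ⟨fun ⟨j, hj⟩ => ⟨j, hj.symm⟩, fun ⟨j, hj⟩ => ⟨j, hj.symm⟩⟩

lemma class_nonempty {q : Setoid (Fin k)} {b : Finset (Fin k)} (hb : b ∈ classesOf q) :
    b.Nonempty := by
  obtain ⟨j, rfl⟩ := mem_classesOf.mp hb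
  exact ⟨j, Finset.mem_filter.mpr ⟨Finset.mem_univ _, q.refl j⟩⟩

noncomputable def classOfQ (q : Setoid (Fin k)) : Quotient q → Finset (Fin k) :=
  Quotient.lift (fun j => Finset.univ.filter fun j' => q.r j j') (fun _ _ h => class_eq h)

lemma classOfQ_inj (q : Setoid (Fin k)) : Function.Injective (classOfQ q) := by
  intro x y
  refine Quotient.inductionOn₂ x y (fun j j' h => ?_)
  have hj'2 : j' ∈ (Finset.univ.filter fun x => q.r j' x) :=
    Finset.mem_filter.mpr ⟨Finset.mem_univ _, q.refl j'⟩
  have h' : (Finset.univ.filter fun x => q.r j x)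
      = (Finset.univ.filter fun x => q.r j' x) := h
  rw [← h'] at hj'2
  exact Quotient.sound (Finset.mem_filter.mp hj'2).2

lemma classesOf_eq_image (q : Setoid (Fin k)) :
    classesOf q = Finset.univ.image (classOfQ q) := by
  ext b
  simp only [mem_classesOf, Finset.mem_image, Finset.mem_univ, true_and]
  constructor
  · rintro ⟨j, rfl⟩; exact ⟨⟦j⟧, rfl⟩
  · rintro ⟨x, rfl⟩
    refine Quotient.inductionOn x (fun j => ⟨j, rfl⟩)

lemma card_classesOf (q : Setoid (Fin k)) : (classesOf q).card = nC q := by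
  rw [classesOf_eq_image, Finset.card_image_of_injective _ (classOfQ_inj q),
    Finset.card_univ, nC, Nat.card_eq_fintype_card]

lemma classes_disjoint (q : Setoid (Fin k)) :
    ∀ b ∈ classesOf q, ∀ b' ∈ classesOf q, b ≠ b' → Disjoint b b' := by
  intro b hb b' hb' hne
  obtain ⟨j, rfl⟩ := mem_classesOf.mp hb
  obtain ⟨j', rfl⟩ := mem_classesOf.mp hb'
  rw [Finset.disjoint_left]
  intro x hx hx'
  simp only [Finset.mem_filter, Finset.mem_univ, true_and] at hx hx'
  exact hne (class_eq (q.trans hx (q.symm hx')))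

lemma classes_biUnion (q : Setoid (Fin k)) :
    (classesOf q).biUnion (fun x => x) = Finset.univ := by
  ext j
  simp only [Finset.mem_biUnion, Finset.mem_univ, iff_true]
  exact ⟨_, mem_classesOf.mpr ⟨j, rfl⟩,
    Finset.mem_filter.mpr ⟨Finset.mem_univ _, q.refl j⟩⟩

lemma sum_card_classesOf (q : Setoid (Fin k)) : ∑ b ∈ classesOf q, b.card = k := by
  rw [← Finset.card_biUnion (classes_disjoint q), classes_biUnion, Finset.card_univ,
    Fintype.card_fin]

lemma ker_eq_iff {q : Setoid (Fin k)} {r : Fin k → ℕ} :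
    Setoid.ker r = q ↔ ∀ j j', q.r j j' ↔ r j = r j' := by
  rw [Setoid.ext_iff]
  constructor
  · intro h j j'
    constructor
    · intro hq
      have h2 : (Setoid.ker r) j j' := (h j j').mpr hq
      exact h2
    · intro hr
      exact (h j j').mp (show (Setoid.ker r) j j' from hr)
  · intro h a b
    exact ⟨fun hr => (h a b).mpr hr, fun hq => (h a b).mp hq⟩

noncomputable def toEmbAux (q : Setoid (Fin k)) (n : ℕ) (r : Fin k → ℕ)
    (h1 : ∀ j, r j < n) (h2 : ∀ j j', q.r j j' ↔ r j = r j') :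
    Quotient q ↪ Fin n where
  toFun := Quotient.lift (fun j => (⟨r j, h1 j⟩ : Fin n)) (fun j j' h => Fin.ext ((h2 j j').mp h))
  inj' := fun x y => Quotient.inductionOn₂ x y
    (fun j j' h => Quotient.sound ((h2 j j').mpr (congrArg Fin.val h)))

lemma mem_fiber_iff {q : Setoid (Fin k)} {n : ℕ} {r : Fin k → ℕ} :
    r ∈ (Fintype.piFinset (fun _ : Fin k => Finset.range n)).filter
        (fun r => Setoid.ker r = q)
      ↔ (∀ j, r j < n) ∧ ∀ j j', q.r j j' ↔ r j = r j' := by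
  rw [Finset.mem_filter, Fintype.mem_piFinset, ker_eq_iff]
  simp [Finset.mem_range]

lemma card_fiber (q : Setoid (Fin k)) (n : ℕ) :
    ((Fintype.piFinset (fun _ : Fin k => Finset.range n)).filter
      (fun r => Setoid.ker r = q)).card = n.descFactorial (nC q) := by
  classical
  have hcard : n.descFactorial (nC q) = (Finset.univ : Finset (Quotient q ↪ Fin n)).card := by
    rw [Finset.card_univ, Fintype.card_embedding_eq, Fintype.card_fin, nC,
      Nat.card_eq_fintype_card]
  rw [hcard]
  refine Finset.card_bij
    (fun r hr => toEmbAux q n r (mem_fiber_iff.mp hr).1 (mem_fiber_iff.mp hr).2)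
    (fun r hr => Finset.mem_univ _) ?_ ?_
  · intro r1 h1 r2 h2 heq
    funext j
    have := DFunLike.congr_fun heq (⟦j⟧ : Quotient q)
    exact congrArg Fin.val this
  · intro g _
    refine ⟨fun j => (g ⟦j⟧ : ℕ), mem_fiber_iff.mpr ⟨fun j => (g ⟦j⟧).isLt, fun j j' => ?_⟩, ?_⟩
    · constructor
      · intro h; exact congrArg Fin.val (congrArg g (Quotient.sound h))
      · intro h; exact Quotient.exact (g.injective (Fin.ext h))
    · refine DFunLike.ext _ _ (fun x => ?_)
      refine Quotient.inductionOn x (fun j => ?_)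
      exact Fin.ext rfl

end comb


section evalsec
variable {A : Type*} [Ring A] [Algebra ℂ A] (κ : ∀ k : ℕ, PP k → (Fin k → A) → ℂ) (a : ℕ → A)

lemma prod_fibers (k : ℕ) (r : Fin k → ℕ) (F : Finset (Fin k) → ℂ) :
    ∏ v ∈ Finset.univ.image r, F (Finset.univ.filter fun j => r j = v)
      = ∏ b ∈ classesOf (Setoid.ker r), F b := by
  classical
  refine Finset.prod_bij (fun v _ => Finset.univ.filter fun j => r j = v) ?_ ?_ ?_ ?_
  · intro v hv
    obtain ⟨j, _, hj⟩ := Finset.mem_image.mp hv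
    refine mem_classesOf.mpr ⟨j, ?_⟩
    ext x
    simp only [Finset.mem_filter, Finset.mem_univ, true_and]
    constructor
    · intro hx
      exact (show r j = r x from hj.trans hx.symm)
    · intro hx
      exact (show r j = r x from hx).symm.trans hj
  · intro v hv v' hv' heq
    obtain ⟨j, _, hj⟩ := Finset.mem_image.mp hv
    have hjv : j ∈ Finset.univ.filter fun x => r x = v :=
      Finset.mem_filter.mpr ⟨Finset.mem_univ _, hj⟩
    have heq' : (Finset.univ.filter fun j => r j = v) = Finset.univ.filter fun j => r j = v' :=
      heq
    rw [heq'] at hjv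
    exact hj.symm.trans (Finset.mem_filter.mp hjv).2
  · intro b hb
    obtain ⟨j, rfl⟩ := mem_classesOf.mp hb
    refine ⟨r j, Finset.mem_image.mpr ⟨j, Finset.mem_univ _, rfl⟩, ?_⟩
    ext x
    simp only [Finset.mem_filter, Finset.mem_univ, true_and]
    constructor
    · intro hx
      exact (show r j = r x from hx.symm)
    · intro hx
      exact (show r j = r x from hx).symm
  · intro v hv
    rfl

variable (hsame : ∀ (k : ℕ) (p : PP k) (n n' : ℕ),
      κ k p (fun _ => a n) = κ k p (fun _ => a n'))
variable (hvanish : ∀ (k : ℕ) (p : PP k) (nv : Fin k → ℕ),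
      (¬ ∀ x y, p.r x y → nv (colOf x) = nv (colOf y)) →
      κ k p (fun j => a (nv j)) = 0)
variable (hfact : ∀ (k : ℕ) (p : PP k) (nv : Fin k → ℕ),
      (∀ x y, p.r x y → nv (colOf x) = nv (colOf y)) →
      κ k p (fun j => a (nv j)) =
        ∏ v ∈ Finset.univ.image nv,
          κ (Finset.univ.filter fun j => nv j = v).card
            (extractP p (Finset.univ.filter fun j => nv j = v)) (fun _ => a v))

include hsame hvanish hfact in
lemma term_eval (k : ℕ) (p : PP k) (r : Fin k → ℕ) :
    κ k p (fun j => a (r j)) =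
      if colSetoid p ≤ Setoid.ker r then
        ∏ b ∈ classesOf (Setoid.ker r), κ b.card (extractP p b) (fun _ => a 0)
      else 0 := by
  by_cases h : colSetoid p ≤ Setoid.ker r
  · rw [if_pos h, hfact k p r ((cond_iff p r).mpr h)]
    rw [Finset.prod_congr rfl (fun v _ => hsame _ _ v 0)]
    exact prod_fibers k r (fun b => κ b.card (extractP p b) (fun _ => a 0))
  · rw [if_neg h]
    exact hvanish k p r (fun hc => h ((cond_iff p r).mp hc))

variable (hcent : ∀ q : PP 1, κ 1 q (fun _ => a 0) = 0)

include hcent in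
lemma kappa_one (m : ℕ) (h : m = 1) (X : PP m) :
    κ m X (fun _ => a 0) = 0 := by
  subst h
  exact hcent X

end evalsec

lemma desc_tendsto (k m : ℕ) (h : 2 * m ≤ k) :
    Filter.Tendsto (fun n : ℕ => ((Real.sqrt n)⁻¹) ^ k * (n.descFactorial m : ℝ))
      Filter.atTop (nhds (if 2 * m = k then 1 else 0)) := by
  have hmain : Filter.Tendsto
      (fun n : ℕ => (∏ i ∈ Finset.range m, (1 - (i : ℝ) / n)) *
        ((Real.sqrt n ^ (k - 2 * m))⁻¹))
      Filter.atTop (nhds (if 2 * m = k then 1 else 0)) := by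
    have h1 : Filter.Tendsto (fun n : ℕ => ∏ i ∈ Finset.range m, (1 - (i : ℝ) / n))
        Filter.atTop (nhds 1) := by
      have := tendsto_finset_prod (Finset.range m)
        (f := fun (i : ℕ) (n : ℕ) => (1 - (i : ℝ) / n)) (x := Filter.atTop)
        (a := fun _ => (1 : ℝ)) ?_
      · simpa using this
      · intro i _
        have : Filter.Tendsto (fun n : ℕ => (i : ℝ) / n) Filter.atTop (nhds 0) :=
          tendsto_const_div_atTop_nhds_zero_nat _
        simpa using (tendsto_const_nhds (x := (1:ℝ))).sub this
    have h2 : Filter.Tendsto (fun n : ℕ => ((Real.sqrt n ^ (k - 2 * m))⁻¹))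
        Filter.atTop (nhds (if 2 * m = k then 1 else 0)) := by
      by_cases he : 2 * m = k
      · have : k - 2 * m = 0 := by omega
        simp [this, he]
      · rw [if_neg he]
        have hsq : Filter.Tendsto (fun n : ℕ => Real.sqrt n) Filter.atTop Filter.atTop := by
          refine Filter.tendsto_atTop_atTop.mpr fun b => ⟨(⌈b⌉₊)^2, fun n hn => ?_⟩
          have h1 : ((⌈b⌉₊:ℝ))^2 ≤ (n:ℝ) := by exact_mod_cast Nat.cast_le.mpr hn
          calc b ≤ (⌈b⌉₊ : ℝ) := Nat.le_ceil b
            _ = Real.sqrt (((⌈b⌉₊:ℝ))^2) := (Real.sqrt_sq (by positivity)).symm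
            _ ≤ Real.sqrt n := Real.sqrt_le_sqrt (by exact_mod_cast h1)
        have hpow : Filter.Tendsto (fun n : ℕ => Real.sqrt n ^ (k - 2 * m))
            Filter.atTop Filter.atTop :=
          (Filter.tendsto_pow_atTop (by omega)).comp hsq
        exact hpow.inv_tendsto_atTop
    have := h1.mul h2
    simpa using this
  refine hmain.congr' ?_
  filter_upwards [Filter.eventually_ge_atTop (max m 1)] with n hn
  have hm : m ≤ n := le_trans (le_max_left _ _) hn
  have hn1 : 1 ≤ n := le_trans (le_max_right _ _) hn
  have h0 : (0:ℝ) < (n:ℝ) := by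
    have : 0 < n := Nat.lt_of_lt_of_le Nat.zero_lt_one hn1
    exact_mod_cast this
  have hs : 0 < Real.sqrt n := Real.sqrt_pos.mpr h0
  have hd : (n.descFactorial m : ℝ) = (n:ℝ)^m * ∏ i ∈ Finset.range m, (1 - (i:ℝ)/n) := by
    rw [Nat.descFactorial_eq_prod_range, Nat.cast_prod]
    rw [show (n:ℝ)^m = ∏ _i ∈ Finset.range m, (n:ℝ) by simp]
    rw [← Finset.prod_mul_distrib]
    refine Finset.prod_congr rfl fun i hi => ?_
    rw [Nat.cast_sub (le_trans (Nat.le_of_lt (Finset.mem_range.mp hi)) hm)]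
    field_simp
  have h2m : (Real.sqrt n)^(2*m) = (n:ℝ)^m := by
    rw [pow_mul, Real.sq_sqrt h0.le]
  have hk : (Real.sqrt n)^k = (Real.sqrt n)^(2*m) * (Real.sqrt n)^(k-2*m) := by
    rw [← pow_add]
    congr 1
    omega
  rw [hd, inv_pow, hk, ← h2m]
  have hne : Real.sqrt n ≠ 0 := hs.ne'
  field_simp


lemma scalar_tendsto (k m : ℕ) (h : 2 * m ≤ k) :
    Filter.Tendsto
      (fun n : ℕ => ((((Real.sqrt n)⁻¹ : ℝ)) : ℂ) ^ k * (n.descFactorial m : ℂ))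
      Filter.atTop (nhds (if 2 * m = k then 1 else 0)) := by
  have hr := desc_tendsto k m h
  have h2 : Filter.Tendsto
      (fun n : ℕ => ((((Real.sqrt n)⁻¹) ^ k * (n.descFactorial m : ℝ) : ℝ) : ℂ))
      Filter.atTop (nhds (((if 2 * m = k then 1 else 0 : ℝ)) : ℂ)) :=
    (Complex.continuous_ofReal.tendsto _).comp hr
  simpa [Complex.ofReal_mul, Complex.ofReal_pow, apply_ite Complex.ofReal] using h2

/-- **central limit theorem for `P`-tracial algebras.**
Let `(a_n)` be `P`-free elements with the same `P`-distribution and vanishing first-order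
cumulants.  Then the cumulants of `S_n = n^{−1/2}(a₀+⋯+a_{n−1})` converge, and the limit of
`κ_p(S_n,…,S_n)` is the sum, over the set partitions `π` of the set of cycles of `p` whose
blocks are either a single cycle with two columns or two one-column cycles, of
`∏_{b∈π} κ_{p_{|∪b}}(a₀,…,a₀)` (partitions of the set of cycles being encoded as the
setoids `q` on the columns which are coarser than the cycle partition of `p`). -/
theorem ptracial_central_limit {A : Type*} [Ring A] [Algebra ℂ A] (T : PTracial A)
    (κ : ∀ k : ℕ, PP k → (Fin k → A) → ℂ)
    (hκ : ∀ (k : ℕ) (p : PP k) (a : Fin k → A),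
      T.m k p a = ∑ p' : PP k, if pLe p' p then κ k p' a else 0)
    (a : ℕ → A)
    (hsame : ∀ (k : ℕ) (p : PP k) (n n' : ℕ), κ k p (fun _ => a n) = κ k p (fun _ => a n'))
    (hvanish : ∀ (k : ℕ) (p : PP k) (nv : Fin k → ℕ),
      (¬ ∀ x y, p.r x y → nv (colOf x) = nv (colOf y)) →
      κ k p (fun j => a (nv j)) = 0)
    (hfact : ∀ (k : ℕ) (p : PP k) (nv : Fin k → ℕ),
      (∀ x y, p.r x y → nv (colOf x) = nv (colOf y)) →
      κ k p (fun j => a (nv j)) =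
        ∏ v ∈ Finset.univ.image nv,
          κ (Finset.univ.filter fun j => nv j = v).card
            (extractP p (Finset.univ.filter fun j => nv j = v)) (fun _ => a v))
    (hcent : ∀ q : PP 1, κ 1 q (fun _ => a 0) = 0)
    (k : ℕ) (p : PP k) :
    Filter.Tendsto
      (fun n : ℕ => κ k p fun _ => (((Real.sqrt n)⁻¹ : ℝ) : ℂ) • ∑ i ∈ Finset.range n, a i)
      Filter.atTop
      (nhds (∑ q : Setoid (Fin k),
        if colSetoid p ≤ q ∧
            (∀ b ∈ classesOf q,
              (b ∈ classesOf (colSetoid p) ∧ b.card = 2) ∨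
              (b.card = 2 ∧ ∀ j ∈ b,
                (Finset.univ.filter fun j' => (colSetoid p).r j j') = {j}))
          then ∏ b ∈ classesOf q, κ b.card (extractP p b) (fun _ => a 0)
          else 0)) := by
  classical
  set W : Setoid (Fin k) → ℂ :=
    fun q => ∏ b ∈ classesOf q, κ b.card (extractP p b) (fun _ => a 0) with hWdef
  have hsumk : ∀ q : Setoid (Fin k), ∑ b ∈ classesOf q, b.card = k := sum_card_classesOf
  have hcards : ∀ q : Setoid (Fin k), (classesOf q).card = nC q := card_classesOf
  have hexp : ∀ n : ℕ,
      κ k p (fun _ => (((Real.sqrt n)⁻¹ : ℝ) : ℂ) • ∑ i ∈ Finset.range n, a i)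
      = ∑ q : Setoid (Fin k),
          ((((Real.sqrt n)⁻¹ : ℝ) : ℂ) ^ k * (n.descFactorial (nC q) : ℂ)) *
            (if colSetoid p ≤ q then W q else 0) := by
    intro n
    rw [kappa_expand T κ hκ a k p _ n]
    have h1 : ∀ r ∈ Fintype.piFinset (fun _ : Fin k => Finset.range n),
        (((Real.sqrt n)⁻¹ : ℝ) : ℂ) ^ k * κ k p (fun j => a (r j))
        = (((Real.sqrt n)⁻¹ : ℝ) : ℂ) ^ k *
            (if colSetoid p ≤ Setoid.ker r then W (Setoid.ker r) else 0) := by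
      intro r _
      rw [term_eval κ a hsame hvanish hfact k p r]
    rw [Finset.sum_congr rfl h1]
    rw [← Finset.sum_fiberwise_of_maps_to (g := fun r : Fin k → ℕ => Setoid.ker r)
      (t := (Finset.univ : Finset (Setoid (Fin k))))
      (fun r _ => Finset.mem_univ _)
      (fun r => (((Real.sqrt n)⁻¹ : ℝ) : ℂ) ^ k *
        (if colSetoid p ≤ Setoid.ker r then W (Setoid.ker r) else 0))]
    refine Finset.sum_congr rfl fun q _ => ?_
    have h2 : ∀ r ∈ (Fintype.piFinset (fun _ : Fin k => Finset.range n)).filter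
        (fun r => Setoid.ker r = q),
        (((Real.sqrt n)⁻¹ : ℝ) : ℂ) ^ k *
          (if colSetoid p ≤ Setoid.ker r then W (Setoid.ker r) else 0)
        = (((Real.sqrt n)⁻¹ : ℝ) : ℂ) ^ k * (if colSetoid p ≤ q then W q else 0) := by
      intro r hr
      rw [(Finset.mem_filter.mp hr).2]
    rw [Finset.sum_congr rfl h2, Finset.sum_const, card_fiber q n, nsmul_eq_mul]
    ring
  have hmain : Filter.Tendsto
      (fun n : ℕ => ∑ q : Setoid (Fin k),
        ((((Real.sqrt n)⁻¹ : ℝ) : ℂ) ^ k * (n.descFactorial (nC q) : ℂ)) *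
          (if colSetoid p ≤ q then W q else 0))
      Filter.atTop
      (nhds (∑ q : Setoid (Fin k),
        if colSetoid p ≤ q ∧
            (∀ b ∈ classesOf q,
              (b ∈ classesOf (colSetoid p) ∧ b.card = 2) ∨
              (b.card = 2 ∧ ∀ j ∈ b,
                (Finset.univ.filter fun j' => (colSetoid p).r j j') = {j}))
          then W q else 0)) := by
    refine tendsto_finset_sum _ fun q _ => ?_
    by_cases hP : colSetoid p ≤ q
    case neg =>
      have hCf : ¬ (colSetoid p ≤ q ∧
          (∀ b ∈ classesOf q,
            (b ∈ classesOf (colSetoid p) ∧ b.card = 2) ∨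
            (b.card = 2 ∧ ∀ j ∈ b,
              (Finset.univ.filter fun j' => (colSetoid p).r j j') = {j}))) :=
        fun hC => hP hC.1
      rw [if_neg hCf]
      refine Filter.Tendsto.congr (f₁ := fun _ : ℕ => (0 : ℂ)) (fun n => ?_) tendsto_const_nhds
      rw [if_neg hP, mul_zero]
    case pos =>
    simp only [if_pos hP]
    have hsub : ∀ b ∈ classesOf q, ∀ j ∈ b,
        (Finset.univ.filter fun j' => (colSetoid p).r j j') ⊆ b := by
      intro b hb j hjb x hx
      obtain ⟨j0, rfl⟩ := mem_classesOf.mp hb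
      simp only [Finset.mem_filter, Finset.mem_univ, true_and] at hx hjb ⊢
      exact q.trans hjb (Setoid.le_def.mp hP hx)
    by_cases hall : ∀ b ∈ classesOf q, b.card = 2
    · have h2m : 2 * nC q = k := by
        have h3 : ∑ b ∈ classesOf q, b.card = ∑ b ∈ classesOf q, 2 :=
          Finset.sum_congr rfl hall
        rw [Finset.sum_const, smul_eq_mul] at h3
        have h4 := hsumk q
        have h5 := hcards q
        omega
      have hC : colSetoid p ≤ q ∧
          (∀ b ∈ classesOf q,
            (b ∈ classesOf (colSetoid p) ∧ b.card = 2) ∨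
            (b.card = 2 ∧ ∀ j ∈ b,
              (Finset.univ.filter fun j' => (colSetoid p).r j j') = {j})) := by
        refine ⟨hP, fun b hb => ?_⟩
        by_cases hex : ∃ j ∈ b,
            (Finset.univ.filter fun j' => (colSetoid p).r j j').card = 2
        · obtain ⟨j, hjb, hj2⟩ := hex
          left
          have heq : (Finset.univ.filter fun j' => (colSetoid p).r j j') = b :=
            Finset.eq_of_subset_of_card_le (hsub b hb j hjb) (by rw [hall b hb, hj2])
          exact ⟨heq ▸ mem_classesOf.mpr ⟨j, rfl⟩, hall b hb⟩
        · right
          refine ⟨hall b hb, fun j hjb => ?_⟩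
          push_neg at hex
          have hjself : j ∈ (Finset.univ.filter fun j' => (colSetoid p).r j j') :=
            Finset.mem_filter.mpr ⟨Finset.mem_univ _, (colSetoid p).refl j⟩
          have hcle : (Finset.univ.filter fun j' => (colSetoid p).r j j').card ≤ 2 := by
            have := Finset.card_le_card (hsub b hb j hjb)
            rw [hall b hb] at this
            exact this
          have hpos : 0 < (Finset.univ.filter fun j' => (colSetoid p).r j j').card :=
            Finset.card_pos.mpr ⟨j, hjself⟩
          have h1card : (Finset.univ.filter fun j' => (colSetoid p).r j j').card = 1 := by
            have := hex j hjb
            omega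
          obtain ⟨x, hx⟩ := Finset.card_eq_one.mp h1card
          have hjx : j = x := by
            have := hx ▸ hjself
            simpa using this
          rw [hx, hjx]
      rw [if_pos hC]
      have hsc := scalar_tendsto k (nC q) (le_of_eq h2m)
      rw [if_pos h2m] at hsc
      have := hsc.mul_const (W q)
      simpa using this
    · have hCf : ¬ (colSetoid p ≤ q ∧
          (∀ b ∈ classesOf q,
            (b ∈ classesOf (colSetoid p) ∧ b.card = 2) ∨
            (b.card = 2 ∧ ∀ j ∈ b,
              (Finset.univ.filter fun j' => (colSetoid p).r j j') = {j}))) := by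
        intro hC
        refine hall (fun b hb => ?_)
        rcases hC.2 b hb with ⟨_, h2⟩ | ⟨h2, _⟩ <;> exact h2
      rw [if_neg hCf]
      by_cases hone : ∃ b ∈ classesOf q, b.card = 1
      · obtain ⟨b, hb, hb1⟩ := hone
        have hWz : W q = 0 :=
          Finset.prod_eq_zero hb (kappa_one κ a hcent b.card hb1 (extractP p b))
        refine Filter.Tendsto.congr (f₁ := fun _ : ℕ => (0 : ℂ)) (fun n => ?_) tendsto_const_nhds
        simp [hWz]
      · push_neg at hone
        have hge : ∀ b ∈ classesOf q, 2 ≤ b.card := by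
          intro b hb
          have h1 : 0 < b.card := Finset.card_pos.mpr (class_nonempty hb)
          have h2 := hone b hb
          omega
        push_neg at hall
        obtain ⟨b0, hb0, hb0ne⟩ := hall
        have hb03 : 3 ≤ b0.card := by
          have := hge b0 hb0
          omega
        have hlt : 2 * nC q < k := by
          have h1 : ∑ b ∈ (classesOf q).erase b0, 2 ≤ ∑ b ∈ (classesOf q).erase b0, b.card :=
            Finset.sum_le_sum (fun b hb => hge b (Finset.mem_of_mem_erase hb))
          rw [Finset.sum_const, smul_eq_mul, Finset.card_erase_of_mem hb0] at h1
          have h2 : b0.card + ∑ b ∈ (classesOf q).erase b0, b.card = k := by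
            rw [Finset.add_sum_erase _ _ hb0]
            exact hsumk q
          have h3 := hcards q
          have hpos : 0 < (classesOf q).card := Finset.card_pos.mpr ⟨b0, hb0⟩
          omega
        have hsc := scalar_tendsto k (nC q) (le_of_lt hlt)
        rw [if_neg (by omega)] at hsc
        have := hsc.mul_const (W q)
        simpa using this
  exact hmain.congr (fun n => (hexp n).symm)
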